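/- (Soundness of Gen_∀) If Φ is countably infinite, φ is a sentence valid in the class of all extended awareness structures over Φ, and q is any primitive proposition, then ∀x φ[q/x] is valid in that class. -/
import Mathlib


namespace AwarenessPaper

/-- Formulas of the language `ℒ^{∀,K,X,A}_n(Φ,𝒳)` with `Φ = ℕ` (countably infinite
set of primitive propositions) and variables indexed by `ℕ`; agents indexed by `ℕ`. -/
inductive Fm : Type
  | prop : ℕ → Fm
  | var  : ℕ → Fm
  | neg  : Fm → Fm
  | and  : Fm → Fm → Fm
  | k    : ℕ → Fm → Fm
  | a    : ℕ → Fm → Fm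
  | x    : ℕ → Fm → Fm
  | all  : ℕ → Fm → Fm

namespace Fm

/-- Primitive propositions occurring in a formula. -/
def props : Fm → Set ℕ
  | .prop p => {p}
  | .var _ => ∅
  | .neg φ => props φ
  | .and φ ψ => props φ ∪ props ψ
  | .k _ φ => props φ
  | .a _ φ => props φ
  | .x _ φ => props φ
  | .all _ φ => props φ

/-- Free variables of a formula. -/
def free : Fm → Set ℕ
  | .prop _ => ∅
  | .var v => {v}
  | .neg φ => free φ
  | .and φ ψ => free φ ∪ free ψ
  | .k _ φ => free φ
  | .a _ φ => free φ
  | .x _ φ => free φ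
  | .all v φ => free φ \ {v}

/-- All variables occurring in a formula (free or bound). -/
def vars : Fm → Set ℕ
  | .prop _ => ∅
  | .var v => {v}
  | .neg φ => vars φ
  | .and φ ψ => vars φ ∪ vars ψ
  | .k _ φ => vars φ
  | .a _ φ => vars φ
  | .x _ φ => vars φ
  | .all v φ => insert v (vars φ)

/-- Quantifier nesting depth; a formula is quantifier-free iff `qcount φ = 0`. -/
def qcount : Fm → ℕ
  | .prop _ => 0
  | .var _ => 0
  | .neg φ => qcount φ
  | .and φ ψ => max (qcount φ) (qcount ψ)
  | .k _ φ => qcount φ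
  | .a _ φ => qcount φ
  | .x _ φ => qcount φ
  | .all _ φ => qcount φ + 1

/-- `substV v ψ φ` is `φ[x_v/ψ]`: replace free occurrences of variable `v` by `ψ`. -/
def substV (v : ℕ) (ψ : Fm) : Fm → Fm
  | .prop p => .prop p
  | .var u => if u = v then ψ else .var u
  | .neg φ => .neg (substV v ψ φ)
  | .and φ₁ φ₂ => .and (substV v ψ φ₁) (substV v ψ φ₂)
  | .k i φ => .k i (substV v ψ φ)
  | .a i φ => .a i (substV v ψ φ)
  | .x i φ => .x i (substV v ψ φ)
  | .all u φ => if u = v then .all u φ else .all u (substV v ψ φ)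

/-- `substP q ψ φ` is `φ[q/ψ]`: replace the primitive proposition `q` by `ψ`. -/
def substP (q : ℕ) (ψ : Fm) : Fm → Fm
  | .prop p => if p = q then ψ else .prop p
  | .var u => .var u
  | .neg φ => .neg (substP q ψ φ)
  | .and φ₁ φ₂ => .and (substP q ψ φ₁) (substP q ψ φ₂)
  | .k i φ => .k i (substP q ψ φ)
  | .a i φ => .a i (substP q ψ φ)
  | .x i φ => .x i (substP q ψ φ)
  | .all u φ => .all u (substP q ψ φ)

/-- Rename primitive propositions along `τ`. -/
def rename (τ : ℕ → ℕ) : Fm → Fm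
  | .prop p => .prop (τ p)
  | .var u => .var u
  | .neg φ => .neg (rename τ φ)
  | .and φ₁ φ₂ => .and (rename τ φ₁) (rename τ φ₂)
  | .k i φ => .k i (rename τ φ)
  | .a i φ => .a i (rename τ φ)
  | .x i φ => .x i (rename τ φ)
  | .all u φ => .all u (rename τ φ)

def or (φ ψ : Fm) : Fm := .neg (.and (.neg φ) (.neg ψ))
def imp (φ ψ : Fm) : Fm := Fm.or (.neg φ) ψ
def iff (φ ψ : Fm) : Fm := .and (imp φ ψ) (imp ψ φ)
/-- `A_i^* φ`, an abbreviation for `K_i (φ ∨ ¬φ)`. -/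
def astar (i : ℕ) (φ : Fm) : Fm := .k i (Fm.or φ (.neg φ))

end Fm

/-- An extended awareness structure for agents `ℕ` over `Φ = ℕ`, with set of worlds `W`:
each world has a nonempty local language `L s`, a valuation, possibility relations `R i`,
and awareness sets `Aw i s` consisting of formulas over the local language. -/
structure EAS (W : Type) where
  L : W → Set ℕ
  L_ne : ∀ s, (L s).Nonempty
  val : W → ℕ → Bool
  R : ℕ → W → W → Prop
  Aw : ℕ → W → Set Fm
  Aw_lang : ∀ i s, ∀ φ ∈ Aw i s, Fm.props φ ⊆ L s

namespace EAS

variable {W : Type}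

/-- One level of the truth definition; `univ` interprets the bodies of quantifiers
(at one lower quantifier depth).  A formula is true at `s` only if its primitive
propositions all belong to the local language `L s`. -/
def satAux (M : EAS W) (univ : W → Fm → Prop) : W → Fm → Prop
  | s, .prop p => p ∈ M.L s ∧ M.val s p = true
  | _, .var _ => False
  | s, .neg φ => Fm.props φ ⊆ M.L s ∧ ¬ satAux M univ s φ
  | s, .and φ ψ => satAux M univ s φ ∧ satAux M univ s ψ
  | s, .k i φ => Fm.props φ ⊆ M.L s ∧ ∀ t, M.R i s t → satAux M univ t φ
  | s, .a i φ => φ ∈ M.Aw i s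
  | s, .x i φ => (Fm.props φ ⊆ M.L s ∧ ∀ t, M.R i s t → satAux M univ t φ) ∧ φ ∈ M.Aw i s
  | s, .all v φ => Fm.props φ ⊆ M.L s ∧
      ∀ β : Fm, Fm.qcount β = 0 → Fm.free β = ∅ → Fm.props β ⊆ M.L s →
        univ s (Fm.substV v β φ)

/-- Truth with quantifier-depth budget `n`. -/
def satN (M : EAS W) : ℕ → W → Fm → Prop
  | 0 => M.satAux fun _ _ => False
  | n + 1 => M.satAux (M.satN n)

/-- `(M,s) ⊨ φ`. Quantifiers range over quantifier-free sentences of the local language. -/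
def sat (M : EAS W) (s : W) (φ : Fm) : Prop := M.satN (Fm.qcount φ) s φ

/-- Awareness is generated by primitive propositions. -/
def agpp (M : EAS W) : Prop :=
  ∀ i s (φ : Fm), φ ∈ M.Aw i s ↔ ∀ p ∈ Fm.props φ, Fm.prop p ∈ M.Aw i s

/-- Agents know what they are aware of. -/
def ka (M : EAS W) : Prop := ∀ i s t, M.R i s t → M.Aw i s = M.Aw i t

end EAS

/-- (Weak) validity in the class `𝒩_n(Φ,𝒳)` of all extended awareness structures
satisfying agpp and ka: truth at every world whose local language contains all the
primitive propositions of the formula. -/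
def Valid (φ : Fm) : Prop :=
  ∀ (W : Type) (M : EAS W), M.agpp → M.ka → ∀ s : W, Fm.props φ ⊆ M.L s → M.sat s φ


section GenAux

namespace Fm

theorem substV_not_free {v : ℕ} {γ : Fm} : ∀ {δ : Fm}, v ∉ δ.free → substV v γ δ = δ := by
  intro δ
  induction δ with
  | prop p => intro _; rfl
  | var u =>
    intro h
    simp only [free, Set.mem_singleton_iff] at h
    have huv : ¬ u = v := fun hh => h hh.symm
    simp [substV, huv]
  | neg φ ih => intro h; simp only [free] at h; simp [substV, ih h]
  | and φ ψ ih1 ih2 =>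
    intro h
    simp only [free, Set.mem_union, not_or] at h
    simp [substV, ih1 h.1, ih2 h.2]
  | k i φ ih => intro h; simp only [free] at h; simp [substV, ih h]
  | a i φ ih => intro h; simp only [free] at h; simp [substV, ih h]
  | x i φ ih => intro h; simp only [free] at h; simp [substV, ih h]
  | all u φ ih =>
    intro h
    by_cases huv : u = v
    · simp [substV, huv]
    · have hvf : v ∉ φ.free := by
        intro hf
        apply h
        simp only [free, Set.mem_diff, Set.mem_singleton_iff]
        exact ⟨hf, fun hh => huv hh.symm⟩
      simp [substV, huv, ih hvf]

theorem substV_substP {x q : ℕ} {γ : Fm} : ∀ {χ : Fm}, x ∉ χ.vars →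
    substV x γ (substP q (.var x) χ) = substP q γ χ := by
  intro χ
  induction χ with
  | prop p =>
    intro _
    by_cases h : p = q <;> simp [substP, substV, h]
  | var u =>
    intro h
    simp only [vars, Set.mem_singleton_iff] at h
    have hux : ¬ u = x := fun hh => h hh.symm
    simp [substP, substV, hux]
  | neg φ ih => intro h; simp only [vars] at h; simp [substP, substV, ih h]
  | and φ ψ ih1 ih2 =>
    intro h
    simp only [vars, Set.mem_union, not_or] at h
    simp [substP, substV, ih1 h.1, ih2 h.2]
  | k i φ ih => intro h; simp only [vars] at h; simp [substP, substV, ih h]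
  | a i φ ih => intro h; simp only [vars] at h; simp [substP, substV, ih h]
  | x i φ ih => intro h; simp only [vars] at h; simp [substP, substV, ih h]
  | all u φ ih =>
    intro h
    simp only [vars, Set.mem_insert_iff, not_or] at h
    have hux : ¬ u = x := fun hh => h.1 hh.symm
    simp [substP, substV, hux, ih h.2]

theorem props_substP_var {q x : ℕ} : ∀ χ : Fm, (substP q (.var x) χ).props = χ.props \ {q} := by
  intro χ
  induction χ with
  | prop p =>
    by_cases h : p = q
    · subst h; simp [substP, props]
    · have hq : q ∉ ({p} : Set ℕ) := by simp [Ne.symm h]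
      simp [substP, props, h, Set.diff_singleton_eq_self hq]
  | var u => simp [substP, props]
  | neg φ ih => simpa [substP, props] using ih
  | and φ ψ ih1 ih2 => simp [substP, props, ih1, ih2, Set.union_diff_distrib]
  | k i φ ih => simpa [substP, props] using ih
  | a i φ ih => simpa [substP, props] using ih
  | x i φ ih => simpa [substP, props] using ih
  | all u φ ih => simpa [substP, props] using ih

theorem qcount_substP {q : ℕ} {γ : Fm} (hγ : γ.qcount = 0) :
    ∀ χ : Fm, (substP q γ χ).qcount = χ.qcount := by
  intro χ
  induction χ with
  | prop p => by_cases h : p = q <;> simp [substP, qcount, h, hγ]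
  | var u => rfl
  | neg φ ih => simpa [substP, qcount] using ih
  | and φ ψ ih1 ih2 => simp [substP, qcount, ih1, ih2]
  | k i φ ih => simpa [substP, qcount] using ih
  | a i φ ih => simpa [substP, qcount] using ih
  | x i φ ih => simpa [substP, qcount] using ih
  | all u φ ih => simp [substP, qcount, ih]

/-- A strict upper bound on the primitive propositions of a formula. -/
def pbound : Fm → ℕ
  | .prop p => p + 1
  | .var _ => 0
  | .neg φ => pbound φ
  | .and φ ψ => max (pbound φ) (pbound ψ)
  | .k _ φ => pbound φ
  | .a _ φ => pbound φ
  | .x _ φ => pbound φ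
  | .all _ φ => pbound φ

theorem lt_pbound : ∀ {χ : Fm} {p : ℕ}, p ∈ χ.props → p < χ.pbound := by
  intro χ
  induction χ with
  | prop r => intro p hp; simp only [props, Set.mem_singleton_iff] at hp; simp [pbound, hp]
  | var u => intro p hp; simp [props] at hp
  | neg φ ih => exact ih
  | and φ ψ ih1 ih2 =>
    intro p hp
    rcases hp with h | h
    · exact lt_of_lt_of_le (ih1 h) (le_max_left _ _)
    · exact lt_of_lt_of_le (ih2 h) (le_max_right _ _)
  | k i φ ih => exact ih
  | a i φ ih => exact ih
  | x i φ ih => exact ih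
  | all u φ ih => exact ih

/-- Translation: replace `prop q` by `β` and rename every other proposition along `σ`. -/
def trf (q : ℕ) (β : Fm) (σ : ℕ → ℕ) : Fm → Fm
  | .prop p => if p = q then β else .prop (σ p)
  | .var u => .var u
  | .neg φ => .neg (trf q β σ φ)
  | .and φ ψ => .and (trf q β σ φ) (trf q β σ ψ)
  | .k i φ => .k i (trf q β σ φ)
  | .a i φ => .a i (trf q β σ φ)
  | .x i φ => .x i (trf q β σ φ)
  | .all u φ => .all u (trf q β σ φ)

variable {q : ℕ} {β : Fm} {σ τ : ℕ → ℕ}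

theorem mem_props_trf : ∀ {χ : Fm} {r : ℕ},
    r ∈ (trf q β σ χ).props ↔ ∃ p ∈ χ.props, r ∈ (trf q β σ (.prop p)).props := by
  intro χ
  induction χ with
  | prop p => intro r; simp [props]
  | var u => intro r; simp [trf, props]
  | neg φ ih => intro r; simpa [trf, props] using ih
  | and φ ψ ih1 ih2 =>
    intro r
    simp only [trf, props, Set.mem_union, ih1, ih2]
    constructor
    · rintro (⟨p, hp, h⟩ | ⟨p, hp, h⟩)
      · exact ⟨p, Or.inl hp, h⟩
      · exact ⟨p, Or.inr hp, h⟩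
    · rintro ⟨p, hp | hp, h⟩
      · exact Or.inl ⟨p, hp, h⟩
      · exact Or.inr ⟨p, hp, h⟩
  | k i φ ih => intro r; simpa [trf, props] using ih
  | a i φ ih => intro r; simpa [trf, props] using ih
  | x i φ ih => intro r; simpa [trf, props] using ih
  | all u φ ih => intro r; simpa [trf, props] using ih

theorem props_trf_subset {χ : Fm} {A : Set ℕ} :
    (trf q β σ χ).props ⊆ A ↔ ∀ p ∈ χ.props, (trf q β σ (.prop p)).props ⊆ A := by
  constructor
  · intro h p hp r hr
    exact h (mem_props_trf.2 ⟨p, hp, hr⟩)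
  · intro h r hr
    obtain ⟨p, hp, hr⟩ := mem_props_trf.1 hr
    exact h p hp hr

theorem qcount_trf (hβ : β.qcount = 0) : ∀ χ : Fm, (trf q β σ χ).qcount = χ.qcount := by
  intro χ
  induction χ with
  | prop p => by_cases h : p = q <;> simp [trf, qcount, h, hβ]
  | var u => rfl
  | neg φ ih => simpa [trf, qcount] using ih
  | and φ ψ ih1 ih2 => simp [trf, qcount, ih1, ih2]
  | k i φ ih => simpa [trf, qcount] using ih
  | a i φ ih => simpa [trf, qcount] using ih
  | x i φ ih => simpa [trf, qcount] using ih
  | all u φ ih => simp [trf, qcount, ih]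

theorem free_trf (hβ : β.free = ∅) : ∀ χ : Fm, (trf q β σ χ).free = χ.free := by
  intro χ
  induction χ with
  | prop p => by_cases h : p = q <;> simp [trf, free, h, hβ]
  | var u => rfl
  | neg φ ih => simpa [trf, free] using ih
  | and φ ψ ih1 ih2 => simp [trf, free, ih1, ih2]
  | k i φ ih => simpa [trf, free] using ih
  | a i φ ih => simpa [trf, free] using ih
  | x i φ ih => simpa [trf, free] using ih
  | all u φ ih => simp [trf, free, ih]

theorem trf_substV (hβ : β.free = ∅) {v : ℕ} {γ : Fm} : ∀ χ : Fm,
    trf q β σ (substV v γ χ) = substV v (trf q β σ γ) (trf q β σ χ) := by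
  intro χ
  induction χ with
  | prop p =>
    by_cases h : p = q
    · simp only [substV, trf, if_pos h]
      exact (substV_not_free (show v ∉ β.free by simp [hβ])).symm
    · simp [trf, substV, h]
  | var u =>
    by_cases h : u = v <;> simp [trf, substV, h]
  | neg φ ih => simp [trf, substV, ih]
  | and φ ψ ih1 ih2 => simp [trf, substV, ih1, ih2]
  | k i φ ih => simp [trf, substV, ih]
  | a i φ ih => simp [trf, substV, ih]
  | x i φ ih => simp [trf, substV, ih]
  | all u φ ih =>
    by_cases h : u = v
    · simp [trf, substV, h]
    · simp [trf, substV, h, ih]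

theorem trf_rename (hτ : ∀ r, τ r ≠ q) (hστ : ∀ r, σ (τ r) = r) :
    ∀ χ : Fm, trf q β σ (χ.rename τ) = χ := by
  intro χ
  induction χ with
  | prop p => simp [rename, trf, hτ p, hστ p]
  | var u => rfl
  | neg φ ih => simp [rename, trf, ih]
  | and φ ψ ih1 ih2 => simp [rename, trf, ih1, ih2]
  | k i φ ih => simp [rename, trf, ih]
  | a i φ ih => simp [rename, trf, ih]
  | x i φ ih => simp [rename, trf, ih]
  | all u φ ih => simp [rename, trf, ih]

theorem qcount_rename : ∀ χ : Fm, (χ.rename τ).qcount = χ.qcount := by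
  intro χ
  induction χ with
  | prop p => rfl
  | var u => rfl
  | neg φ ih => simpa [rename, qcount] using ih
  | and φ ψ ih1 ih2 => simp [rename, qcount, ih1, ih2]
  | k i φ ih => simpa [rename, qcount] using ih
  | a i φ ih => simpa [rename, qcount] using ih
  | x i φ ih => simpa [rename, qcount] using ih
  | all u φ ih => simp [rename, qcount, ih]

theorem free_rename : ∀ χ : Fm, (χ.rename τ).free = χ.free := by
  intro χ
  induction χ with
  | prop p => rfl
  | var u => rfl
  | neg φ ih => simpa [rename, free] using ih
  | and φ ψ ih1 ih2 => simp [rename, free, ih1, ih2]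
  | k i φ ih => simpa [rename, free] using ih
  | a i φ ih => simpa [rename, free] using ih
  | x i φ ih => simpa [rename, free] using ih
  | all u φ ih => simp [rename, free, ih]

theorem mem_props_rename : ∀ {χ : Fm} {r : ℕ},
    r ∈ (χ.rename τ).props ↔ ∃ p ∈ χ.props, r = τ p := by
  intro χ
  induction χ with
  | prop p => intro r; simp [rename, props, eq_comm]
  | var u => intro r; simp [rename, props]
  | neg φ ih => intro r; simpa [rename, props] using ih
  | and φ ψ ih1 ih2 =>
    intro r
    simp only [rename, props, Set.mem_union, ih1, ih2]
    constructor
    · rintro (⟨p, hp, h⟩ | ⟨p, hp, h⟩)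
      · exact ⟨p, Or.inl hp, h⟩
      · exact ⟨p, Or.inr hp, h⟩
    · rintro ⟨p, hp | hp, h⟩
      · exact Or.inl ⟨p, hp, h⟩
      · exact Or.inr ⟨p, hp, h⟩
  | k i φ ih => intro r; simpa [rename, props] using ih
  | a i φ ih => intro r; simpa [rename, props] using ih
  | x i φ ih => intro r; simpa [rename, props] using ih
  | all u φ ih => intro r; simpa [rename, props] using ih

theorem trf_eq_substP : ∀ {χ : Fm}, (∀ p ∈ χ.props, p ≠ q → σ p = p) →
    trf q β σ χ = substP q β χ := by
  intro χ
  induction χ with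
  | prop p =>
    intro h
    by_cases hp : p = q
    · simp [trf, substP, hp]
    · simp [trf, substP, hp, h p (by simp [props]) hp]
  | var u => intro _; rfl
  | neg φ ih => intro h; simp only [props] at h; simp [trf, substP, ih h]
  | and φ ψ ih1 ih2 =>
    intro h
    simp only [props, Set.mem_union] at h
    simp [trf, substP, ih1 (fun p hp => h p (Or.inl hp)), ih2 (fun p hp => h p (Or.inr hp))]
  | k i φ ih => intro h; simp only [props] at h; simp [trf, substP, ih h]
  | a i φ ih => intro h; simp only [props] at h; simp [trf, substP, ih h]
  | x i φ ih => intro h; simp only [props] at h; simp [trf, substP, ih h]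
  | all u φ ih => intro h; simp only [props] at h; simp [trf, substP, ih h]

end Fm

namespace EAS

variable {W : Type}

theorem satAux_props (M : EAS W) {u : W → Fm → Prop} :
    ∀ {χ : Fm} {s : W}, M.satAux u s χ → χ.props ⊆ M.L s := by
  intro χ
  induction χ with
  | prop p => intro s h; simpa [Fm.props, satAux] using h.1
  | var u => intro s h; exact absurd h (by simp [satAux])
  | neg φ ih => intro s h; exact h.1
  | and φ ψ ih1 ih2 =>
    intro s h
    simp only [Fm.props, Set.union_subset_iff]
    exact ⟨ih1 h.1, ih2 h.2⟩
  | k i φ ih => intro s h; exact h.1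
  | a i φ ih => intro s h; exact M.Aw_lang i s φ h
  | x i φ ih => intro s h; exact h.1.1
  | all u φ ih => intro s h; exact h.1

theorem satAux_qf (M : EAS W) : ∀ {χ : Fm}, χ.qcount = 0 →
    ∀ (u u' : W → Fm → Prop) (s : W), M.satAux u s χ ↔ M.satAux u' s χ := by
  intro χ
  induction χ with
  | prop p => intro _ u u' s; exact Iff.rfl
  | var v => intro _ u u' s; exact Iff.rfl
  | neg φ ih =>
    intro h u u' s
    exact and_congr Iff.rfl (not_congr (ih h u u' s))
  | and φ ψ ih1 ih2 =>
    intro h u u' s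
    simp only [Fm.qcount, Nat.max_eq_zero_iff] at h
    exact and_congr (ih1 h.1 u u' s) (ih2 h.2 u u' s)
  | k i φ ih =>
    intro h u u' s
    exact and_congr Iff.rfl (forall_congr' fun t => imp_congr Iff.rfl (ih h u u' t))
  | a i φ ih => intro _ u u' s; exact Iff.rfl
  | x i φ ih =>
    intro h u u' s
    exact and_congr (and_congr Iff.rfl
      (forall_congr' fun t => imp_congr Iff.rfl (ih h u u' t))) Iff.rfl
  | all u φ ih => intro h; simp [Fm.qcount] at h

theorem satN_qf (M : EAS W) {χ : Fm} (h : χ.qcount = 0) (n : ℕ) (s : W) :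
    M.satN n s χ ↔ M.satN 0 s χ := by
  cases n with
  | zero => exact Iff.rfl
  | succ n => exact satAux_qf M h _ _ s

open Classical in
/-- The twisted model interpreting `prop q` as `β` and `prop p` as `prop (σ p)`. -/
noncomputable def mkM (M : EAS W) (q : ℕ) (β : Fm) (σ τ : ℕ → ℕ)
    (hτ : ∀ r, τ r ≠ q) (hστ : ∀ r, σ (τ r) = r) : EAS W where
  L := fun t => {p | (Fm.trf q β σ (.prop p)).props ⊆ M.L t}
  L_ne := fun t => by
    obtain ⟨r, hr⟩ := M.L_ne t
    exact ⟨τ r, by simp [Fm.trf, Fm.props, hτ r, hστ r, Set.singleton_subset_iff, hr]⟩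
  val := fun t p => if p = q then (if M.satN 0 t β then true else false) else M.val t (σ p)
  R := M.R
  Aw := fun i t => {ψ | Fm.trf q β σ ψ ∈ M.Aw i t}
  Aw_lang := by
    intro i t ψ hψ p hp
    intro r hr
    exact M.Aw_lang i t _ hψ (Fm.mem_props_trf.2 ⟨p, hp, hr⟩)

variable {M : EAS W} {q : ℕ} {β : Fm} {σ τ : ℕ → ℕ}
  {hτ : ∀ r, τ r ≠ q} {hστ : ∀ r, σ (τ r) = r}

theorem mkM_agpp (hag : M.agpp) : (mkM M q β σ τ hτ hστ).agpp := by
  intro i t ψ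
  show Fm.trf q β σ ψ ∈ M.Aw i t ↔ ∀ p ∈ ψ.props, Fm.trf q β σ (.prop p) ∈ M.Aw i t
  rw [hag i t (Fm.trf q β σ ψ)]
  constructor
  · intro h p hp
    rw [hag i t]
    intro r hr
    exact h r (Fm.mem_props_trf.2 ⟨p, hp, hr⟩)
  · intro h r hr
    obtain ⟨p, hp, hrp⟩ := Fm.mem_props_trf.1 hr
    exact (hag i t _).1 (h p hp) r hrp

theorem mkM_ka (hka : M.ka) : (mkM M q β σ τ hτ hστ).ka := by
  intro i s t hR
  show {ψ | Fm.trf q β σ ψ ∈ M.Aw i s} = {ψ | Fm.trf q β σ ψ ∈ M.Aw i t}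
  rw [hka i s t hR]

theorem props_mkM_iff {χ : Fm} {t : W} :
    χ.props ⊆ (mkM M q β σ τ hτ hστ).L t ↔ (Fm.trf q β σ χ).props ⊆ M.L t := by
  rw [Fm.props_trf_subset]
  exact Iff.rfl

theorem satAux_trf (hβq : β.qcount = 0) (hβf : β.free = ∅)
    {u' u : W → Fm → Prop} (hu : ∀ t χ, u' t χ ↔ u t (Fm.trf q β σ χ)) :
    ∀ (χ : Fm) (t : W),
      (mkM M q β σ τ hτ hστ).satAux u' t χ ↔ M.satAux u t (Fm.trf q β σ χ) := by
  intro χ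
  induction χ with
  | prop p =>
    intro t
    by_cases h : p = q
    · have h1 : M.satAux u t β ↔ M.satN 0 t β := satAux_qf M hβq u _ t
      have h2 : M.satN 0 t β → β.props ⊆ M.L t := fun hh => satAux_props M hh
      have hR : M.satAux u t (Fm.trf q β σ (.prop p)) ↔ M.satN 0 t β := by
        simp only [Fm.trf, if_pos h]; exact h1
      have hL : p ∈ (mkM M q β σ τ hτ hστ).L t ↔ β.props ⊆ M.L t := by
        show (Fm.trf q β σ (.prop p)).props ⊆ M.L t ↔ _
        simp [Fm.trf, h]
      have hval : ((mkM M q β σ τ hτ hστ).val t p = true) ↔ M.satN 0 t β := by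
        show (if p = q then _ else _) = true ↔ _
        rw [if_pos h]
        by_cases hb : M.satN 0 t β
        · rw [if_pos hb]; simp [hb]
        · rw [if_neg hb]; simp [hb]
      rw [hR]
      show (p ∈ (mkM M q β σ τ hτ hστ).L t ∧ _) ↔ _
      rw [hL, hval]
      exact ⟨fun hh => hh.2, fun hh => ⟨h2 hh, hh⟩⟩
    · show ((Fm.trf q β σ (.prop p)).props ⊆ M.L t ∧ _) ↔ _
      simp [Fm.trf, h, mkM, satAux, Fm.props, Set.singleton_subset_iff]
  | var v => intro t; simp [Fm.trf, satAux]
  | neg φ ih =>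
    intro t
    show (φ.props ⊆ _ ∧ ¬ _) ↔ ((Fm.trf q β σ φ).props ⊆ _ ∧ ¬ _)
    exact and_congr props_mkM_iff (not_congr (ih t))
  | and φ ψ ih1 ih2 =>
    intro t
    exact and_congr (ih1 t) (ih2 t)
  | k i φ ih =>
    intro t
    exact and_congr props_mkM_iff
      (forall_congr' fun t' => imp_congr Iff.rfl (ih t'))
  | a i φ ih =>
    intro t
    exact Iff.rfl
  | x i φ ih =>
    intro t
    exact and_congr (and_congr props_mkM_iff
      (forall_congr' fun t' => imp_congr Iff.rfl (ih t'))) Iff.rfl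
  | all v φ ih =>
    intro t
    show (φ.props ⊆ _ ∧ _) ↔ ((Fm.trf q β σ φ).props ⊆ _ ∧ _)
    refine and_congr props_mkM_iff ?_
    constructor
    · intro h δ hδq hδf hδL
      have hγq : (δ.rename τ).qcount = 0 := by rw [Fm.qcount_rename]; exact hδq
      have hγf : (δ.rename τ).free = ∅ := by rw [Fm.free_rename]; exact hδf
      have hγL : (δ.rename τ).props ⊆ (mkM M q β σ τ hτ hστ).L t := by
        intro p hp
        obtain ⟨r, hr, rfl⟩ := Fm.mem_props_rename.1 hp
        show (Fm.trf q β σ (.prop (τ r))).props ⊆ M.L t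
        simp [Fm.trf, hτ r, hστ r, Fm.props, Set.singleton_subset_iff]
        exact hδL hr
      have := (hu t _).1 (h _ hγq hγf hγL)
      rwa [Fm.trf_substV hβf, Fm.trf_rename hτ hστ] at this
    · intro h γ hγq hγf hγL
      have hδq : (Fm.trf q β σ γ).qcount = 0 := by rw [Fm.qcount_trf hβq]; exact hγq
      have hδf : (Fm.trf q β σ γ).free = ∅ := by rw [Fm.free_trf hβf]; exact hγf
      have hδL : (Fm.trf q β σ γ).props ⊆ M.L t := props_mkM_iff.1 hγL
      have := h _ hδq hδf hδL
      rw [← Fm.trf_substV hβf] at this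
      exact (hu t _).2 this

theorem satN_trf (hβq : β.qcount = 0) (hβf : β.free = ∅) :
    ∀ (n : ℕ) (χ : Fm) (t : W),
      (mkM M q β σ τ hτ hστ).satN n t χ ↔ M.satN n t (Fm.trf q β σ χ) := by
  intro n
  induction n with
  | zero => exact satAux_trf hβq hβf (fun t χ => Iff.rfl)
  | succ n ih => exact satAux_trf hβq hβf (fun t χ => ih χ t)

end EAS

end GenAux

/-- Soundness of Gen_∀: if the sentence `φ` is valid and `q` is a primitive proposition,
then `∀x φ[q/x]` is valid (for `x` substitutable for `q` in `φ`, i.e. `x` fresh). -/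
theorem stmt7 (φ : Fm) (hsent : Fm.free φ = ∅) (hv : Valid φ)
    (q : ℕ) (x : ℕ) (hx : x ∉ Fm.vars φ) :
    Valid (.all x (Fm.substP q (.var x) φ)) := by
  intro W M hag hka s hLs
  have hLs' : φ.props \ {q} ⊆ M.L s := by
    simpa [Fm.props, Fm.props_substP_var] using hLs
  have hqeq : (Fm.substP q (.var x) φ).qcount = φ.qcount := Fm.qcount_substP (γ := Fm.var x) rfl φ
  refine ⟨by rw [Fm.props_substP_var]; exact hLs', ?_⟩
  intro γ hγq hγf hγL
  rw [Fm.substV_substP hx, hqeq]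
  set N : ℕ := max φ.pbound (q + 1) with hN
  have hqN : q < N := lt_of_lt_of_le (Nat.lt_succ_self q) (le_max_right _ _)
  set σ : ℕ → ℕ := fun p => if p < N then p else if p = N then q else p - 1 with hσ
  set τ : ℕ → ℕ := fun r => if r = q then N else if r < N then r else r + 1 with hτdef
  have hτ : ∀ r, τ r ≠ q := by
    intro r
    simp only [hτdef]
    split_ifs <;> omega
  have hστ : ∀ r, σ (τ r) = r := by
    intro r
    simp only [hτdef, hσ]
    split_ifs <;> omega
  have hσφ : ∀ p ∈ φ.props, p ≠ q → σ p = p := by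
    intro p hp _
    have hpN : p < N := lt_of_lt_of_le (Fm.lt_pbound hp) (le_max_left _ _)
    simp [hσ, hpN]
  have hφL' : φ.props ⊆ (EAS.mkM M q γ σ τ hτ hστ).L s := by
    intro p hp
    show (Fm.trf q γ σ (.prop p)).props ⊆ M.L s
    by_cases hpq : p = q
    · simpa [Fm.trf, hpq] using hγL
    · simp only [Fm.trf, if_neg hpq, hσφ p hp hpq, Fm.props, Set.singleton_subset_iff]
      exact hLs' ⟨hp, hpq⟩
  rw [← Fm.trf_eq_substP hσφ]
  exact (EAS.satN_trf (M := M) (hτ := hτ) (hστ := hστ) hγq hγf φ.qcount φ s).1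
    (hv W _ (EAS.mkM_agpp hag) (EAS.mkM_ka hka) s hφL')

end AwarenessPaper
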